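/- Let λ < 0 and Δ > 0, M ∈ ℕ. Then ∫_0^∞ (e^{λs} - ∑_{j=0}^M e^{λ j Δ} 1_{[jΔ,(j+1)Δ]}(s))² ds = 1/(-2λ) + ((e^{2λ(M+1)Δ} - 1)Δ/(e^{2λΔ} - 1)) · (1 - 2(e^{λΔ} - 1)/(λΔ)), and this quantity tends to 0 as simultaneously Δ → 0 and ΔM → ∞. -/

import Mathlib

open MeasureTheory Filter Finset Topology

private lemma expMul_hasDerivAt (c s : ℝ) :
    HasDerivAt (fun x : ℝ => Real.exp (c * x)) (c * Real.exp (c * s)) s := by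
  have h := (Real.hasDerivAt_exp (c * s)).comp s ((hasDerivAt_id s).const_mul c)
  refine h.congr_deriv ?_
  ring

private lemma interval_sq (lam a b : ℝ) (hlam : lam ≠ 0) :
    ∫ x in a..b, (Real.exp (lam*x) - Real.exp (lam*a))^2 =
      (Real.exp (2*lam*b) - Real.exp (2*lam*a))/(2*lam)
        - 2*Real.exp (lam*a)*(Real.exp (lam*b)-Real.exp (lam*a))/lam
        + Real.exp (2*lam*a)*(b-a) := by
  set F : ℝ → ℝ := fun x =>
    Real.exp (2*lam*x)/(2*lam) - 2*Real.exp (lam*a)*Real.exp (lam*x)/lam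
      + Real.exp (2*lam*a)*x with hF
  have hderiv : ∀ x ∈ Set.uIcc a b,
      HasDerivAt F ((Real.exp (lam*x) - Real.exp (lam*a))^2) x := by
    intro x _
    have h1 := ((expMul_hasDerivAt (2*lam) x).div_const (2*lam)).sub
      (((expMul_hasDerivAt lam x).const_mul (2*Real.exp (lam*a))).div_const lam)
    have h3 := h1.add ((hasDerivAt_id x).const_mul (Real.exp (2*lam*a)))
    refine h3.congr_deriv ?_
    have e1 : Real.exp (2*lam*x) = Real.exp (lam*x)^2 := by
      rw [sq, ← Real.exp_add]; ring_nf
    have e2 : Real.exp (2*lam*a) = Real.exp (lam*a)^2 := by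
      rw [sq, ← Real.exp_add]; ring_nf
    rw [e1, e2]
    field_simp
    ring
  have hcont : Continuous fun x : ℝ => (Real.exp (lam*x) - Real.exp (lam*a))^2 := by
    continuity
  rw [intervalIntegral.integral_eq_sub_of_hasDerivAt hderiv (hcont.intervalIntegrable a b)]
  simp only [hF]
  ring

private lemma slope_exp : Tendsto (fun u : ℝ => (Real.exp u - 1)/u) (𝓝[≠] (0:ℝ)) (𝓝 1) := by
  have h := hasDerivAt_iff_tendsto_slope.mp (Real.hasDerivAt_exp 0)
  simp only [Real.exp_zero] at h
  refine h.congr fun u => ?_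
  simp [slope_def_field]

private lemma kernel_formula (lam : ℝ) (hlam : lam < 0) (Δ : ℝ) (hΔ : 0 < Δ) (M : ℕ) :
    (∫ s in Set.Ioi (0 : ℝ),
        (Real.exp (lam * s)
          - ∑ j ∈ Finset.range (M + 1),
              Set.indicator (Set.Icc ((j : ℝ) * Δ) (((j : ℝ) + 1) * Δ))
                (fun _ => Real.exp (lam * j * Δ)) s) ^ 2)
      = 1 / (-(2 * lam))
        + (Real.exp (2 * lam * ((M : ℝ) + 1) * Δ) - 1) * Δ
            / (Real.exp (2 * lam * Δ) - 1)
          * (1 - 2 * (Real.exp (lam * Δ) - 1) / (lam * Δ)) := by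
  have hne : lam ≠ 0 := ne_of_lt hlam
  have h2ne : (2:ℝ)*lam ≠ 0 := by simp [hne]
  set f : ℝ → ℝ := fun s =>
    (Real.exp (lam * s)
      - ∑ j ∈ Finset.range (M + 1),
          Set.indicator (Set.Icc ((j : ℝ) * Δ) (((j : ℝ) + 1) * Δ))
            (fun _ => Real.exp (lam * j * Δ)) s) ^ 2 with hf
  set T : ℝ := ((M:ℝ)+1)*Δ with hT
  have hT0 : (0:ℝ) ≤ T := by positivity
  -- the sum on open subintervals
  have sum_Ioo : ∀ j : ℕ, j ≤ M → ∀ s ∈ Set.Ioo ((j:ℝ)*Δ) (((j:ℝ)+1)*Δ),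
      (∑ k ∈ Finset.range (M+1),
        Set.indicator (Set.Icc ((k:ℝ)*Δ) (((k:ℝ)+1)*Δ))
          (fun _ => Real.exp (lam * k * Δ)) s)
        = Real.exp (lam * j * Δ) := by
    intro j hj s hs
    rw [Finset.sum_eq_single j]
    · refine Set.indicator_of_mem ?_ _
      exact ⟨hs.1.le, hs.2.le⟩
    · intro k _ hkj
      apply Set.indicator_of_notMem
      rcases lt_or_gt_of_ne hkj with h | h
      · intro hmem
        have h1 : ((k:ℝ)+1)*Δ ≤ (j:ℝ)*Δ := by
          apply mul_le_mul_of_nonneg_right _ hΔ.le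
          exact_mod_cast Nat.succ_le_of_lt h
        exact absurd hmem.2 (not_le.mpr (lt_of_le_of_lt h1 hs.1))
      · intro hmem
        have h1 : ((j:ℝ)+1)*Δ ≤ (k:ℝ)*Δ := by
          apply mul_le_mul_of_nonneg_right _ hΔ.le
          exact_mod_cast Nat.succ_le_of_lt h
        exact absurd hmem.1 (not_le.mpr (lt_of_lt_of_le hs.2 h1))
    · intro hnot
      exact absurd (Finset.mem_range.mpr (Nat.lt_succ_of_le hj)) hnot
  -- the sum vanishes beyond T
  have sum_tail : ∀ s : ℝ, T < s →
      (∑ k ∈ Finset.range (M+1),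
        Set.indicator (Set.Icc ((k:ℝ)*Δ) (((k:ℝ)+1)*Δ))
          (fun _ => Real.exp (lam * k * Δ)) s) = 0 := by
    intro s hs
    apply Finset.sum_eq_zero
    intro k hk
    apply Set.indicator_of_notMem
    intro hmem
    have hkM : (k:ℝ) ≤ (M:ℝ) := by
      exact_mod_cast Nat.lt_succ_iff.mp (Finset.mem_range.mp hk)
    have h1 : ((k:ℝ)+1)*Δ ≤ T := by
      rw [hT]
      apply mul_le_mul_of_nonneg_right (by linarith) hΔ.le
    exact absurd hmem.2 (not_le.mpr (lt_of_le_of_lt h1 hs))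
  have hpt : ∀ c : ℝ, ∀ᵐ x : ℝ, x ≠ c := by
    intro c
    rw [ae_iff]
    simpa using measure_singleton c
  -- a.e. description of f on each subinterval
  have hIoc : ∀ j : ℕ, j ≤ M → ∀ᵐ x : ℝ,
      x ∈ Set.Ioc ((j:ℝ)*Δ) (((j:ℝ)+1)*Δ) →
        f x = (Real.exp (lam*x) - Real.exp (lam * j * Δ))^2 := by
    intro j hj
    filter_upwards [hpt (((j:ℝ)+1)*Δ)] with x hx hmem
    simp only [hf]
    rw [sum_Ioo j hj x ⟨hmem.1, lt_of_le_of_ne hmem.2 hx⟩]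
  set a : ℕ → ℝ := fun k => (k:ℝ)*Δ with ha
  have hacast : ∀ k : ℕ, a (k+1) = ((k:ℝ)+1)*Δ := by
    intro k; simp [ha]
  have hale : ∀ k : ℕ, a k ≤ a (k+1) := by
    intro k
    rw [hacast]
    apply mul_le_mul_of_nonneg_right (by linarith) hΔ.le
  have hInt : ∀ k : ℕ, k < M+1 → IntervalIntegrable f volume (a k) (a (k+1)) := by
    intro k hk
    rw [intervalIntegrable_iff_integrableOn_Ioc_of_le (hale k)]
    have hcont : Continuous fun x : ℝ => (Real.exp (lam*x) - Real.exp (lam * k * Δ))^2 :=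
      ((Real.continuous_exp.comp (continuous_const.mul continuous_id)).sub continuous_const).pow 2
    have hae : f =ᵐ[volume.restrict (Set.Ioc (a k) (a (k+1)))]
        fun x => (Real.exp (lam*x) - Real.exp (lam * k * Δ))^2 := by
      refine (ae_restrict_iff' measurableSet_Ioc).mpr ?_
      rw [hacast]
      exact hIoc k (Nat.lt_succ_iff.mp hk)
    exact (hcont.integrableOn_Ioc).congr hae.symm
  have ha0 : a 0 = 0 := by simp [ha]
  have haM : a (M+1) = T := by rw [hacast, hT]
  have hIoc0T : IntegrableOn f (Set.Ioc 0 T) := by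
    have := IntervalIntegrable.trans_iterate hInt
    rw [ha0, haM] at this
    exact (intervalIntegrable_iff_integrableOn_Ioc_of_le hT0).mp this
  -- the tail
  have htail_deriv : ∀ x ∈ Set.Ici T,
      HasDerivAt (fun x => Real.exp (2*lam*x)/(2*lam)) (Real.exp (2*lam*x)) x := by
    intro x _
    have h := (expMul_hasDerivAt (2*lam) x).div_const (2*lam)
    refine h.congr_deriv ?_
    field_simp
  have htail_lim : Tendsto (fun x => Real.exp (2*lam*x)/(2*lam)) atTop (𝓝 0) := by
    have h1 : Tendsto (fun x : ℝ => 2*lam*x) atTop atBot :=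
      (tendsto_const_mul_atBot_of_neg (by linarith)).mpr tendsto_id
    have h2 := (Real.tendsto_exp_atBot.comp h1).div_const (2*lam)
    simpa using h2
  have hnonneg : ∀ x ∈ Set.Ioi T, 0 ≤ Real.exp (2*lam*x) := fun x _ => (Real.exp_pos _).le
  have htail_int : IntegrableOn (fun x => Real.exp (2*lam*x)) (Set.Ioi T) :=
    integrableOn_Ioi_deriv_of_nonneg' htail_deriv hnonneg htail_lim
  have htail_val : ∫ x in Set.Ioi T, Real.exp (2*lam*x) = -(Real.exp (2*lam*T)/(2*lam)) := by
    rw [integral_Ioi_of_hasDerivAt_of_nonneg' htail_deriv hnonneg htail_lim]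
    ring
  have hfT : Set.EqOn f (fun x => Real.exp (2*lam*x)) (Set.Ioi T) := by
    intro x hx
    simp only [hf]
    rw [sum_tail x hx, sub_zero, sq, ← Real.exp_add]
    congr 1
    ring
  have htail_f_int : IntegrableOn f (Set.Ioi T) := by
    refine htail_int.congr ?_
    exact (ae_restrict_iff' measurableSet_Ioi).mpr
      (Eventually.of_forall fun x hx => (hfT hx).symm)
  have htail_f_val : ∫ x in Set.Ioi T, f x = -(Real.exp (2*lam*T)/(2*lam)) := by
    rw [setIntegral_congr_fun measurableSet_Ioi hfT, htail_val]
  -- split the integral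
  have hsplit : ∫ s in Set.Ioi (0:ℝ), f s
      = (∫ s in Set.Ioc 0 T, f s) + ∫ s in Set.Ioi T, f s := by
    rw [← setIntegral_union (Set.Ioc_disjoint_Ioi le_rfl) measurableSet_Ioi hIoc0T htail_f_int,
      Set.Ioc_union_Ioi_eq_Ioi hT0]
  -- abbreviations
  set r : ℝ := Real.exp (lam*Δ) with hr
  set q : ℝ := Real.exp (2*lam*Δ) with hq
  have hrq : q = r^2 := by
    rw [hq, hr, sq, ← Real.exp_add]; ring_nf
  have hq1 : q ≠ 1 := by
    rw [hq]
    exact ne_of_lt (Real.exp_lt_one_iff.mpr (by nlinarith))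
  set C : ℝ := (q-1)/(2*lam) - 2*(r-1)/lam + Δ with hC
  -- value on each subinterval
  have hval : ∀ j : ℕ, j < M+1 → (∫ x in a j..a (j+1), f x) = q^j * C := by
    intro j hj
    have hcongr : (∫ x in a j..a (j+1), f x)
        = ∫ x in a j..a (j+1), (Real.exp (lam*x) - Real.exp (lam * j * Δ))^2 := by
      apply intervalIntegral.integral_congr_ae
      rw [Set.uIoc_of_le (hale j), hacast]
      exact hIoc j (Nat.lt_succ_iff.mp hj)
    rw [hcongr]
    have harg : lam * (j:ℝ) * Δ = lam * a j := by simp only [ha]; ring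
    rw [harg, interval_sq lam (a j) (a (j+1)) hne]
    have e1 : Real.exp (lam * a j) = r^j := by
      simp only [ha]
      rw [hr, show lam*((j:ℝ)*Δ) = (j:ℕ)*(lam*Δ) by push_cast; ring, Real.exp_nat_mul]
    have e2 : Real.exp (2*lam * a j) = q^j := by
      simp only [ha]
      rw [hq, show 2*lam*((j:ℝ)*Δ) = (j:ℕ)*(2*lam*Δ) by push_cast; ring, Real.exp_nat_mul]
    have e3 : Real.exp (lam * a (j+1)) = r^j * r := by
      rw [hacast, hr, show lam*(((j:ℝ)+1)*Δ) = (j:ℕ)*(lam*Δ) + lam*Δ by push_cast; ring,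
        Real.exp_add, Real.exp_nat_mul]
    have e4 : Real.exp (2*lam * a (j+1)) = q^j * q := by
      rw [hacast, hq, show 2*lam*(((j:ℝ)+1)*Δ) = (j:ℕ)*(2*lam*Δ) + 2*lam*Δ by push_cast; ring,
        Real.exp_add, Real.exp_nat_mul]
    have e5 : a (j+1) - a j = Δ := by rw [hacast]; simp only [ha]; ring
    rw [e1, e2, e3, e4, e5, hC, hrq]
    have hp : (r^2)^j = (r^j)^2 := by rw [← pow_mul, ← pow_mul, mul_comm]
    rw [hp]
    field_simp
  -- sum over the subintervals
  have hsum : ∫ s in Set.Ioc 0 T, f s = (q^(M+1) - 1)/(q - 1) * C := by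
    have h1 : ∫ x in (a 0)..(a (M+1)), f x = ∫ s in Set.Ioc 0 T, f s := by
      rw [ha0, haM, intervalIntegral.integral_of_le hT0]
    rw [← h1, ← intervalIntegral.sum_integral_adjacent_intervals hInt]
    rw [Finset.sum_congr rfl fun j hj => hval j (Finset.mem_range.mp hj)]
    rw [← Finset.sum_mul, geom_sum_eq hq1]
  -- final computation
  have hQT : Real.exp (2*lam*T) = q^(M+1) := by
    rw [hT, hq, show 2*lam*(((M:ℝ)+1)*Δ) = ((M+1:ℕ):ℝ)*(2*lam*Δ) by push_cast; ring,
      Real.exp_nat_mul]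
  have hQT' : Real.exp (2 * lam * ((M : ℝ) + 1) * Δ) = q^(M+1) := by
    rw [← hQT, hT]; ring_nf
  rw [hsplit, hsum, htail_f_val, hQT, hQT']
  rw [hC]
  have hq1' : q - 1 ≠ 0 := sub_ne_zero.mpr hq1
  have hΔne : Δ ≠ 0 := hΔ.ne'
  field_simp
  ring

/-- One-dimensional discretization-plus-truncation error of the exponential
kernel: explicit formula and convergence to `0` as `Δ → 0` and `ΔM → ∞`. -/
theorem kernel_step_approx_error (lam : ℝ) (hlam : lam < 0) :
    (∀ (Δ : ℝ), 0 < Δ → ∀ M : ℕ,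
      (∫ s in Set.Ioi (0 : ℝ),
          (Real.exp (lam * s)
            - ∑ j ∈ Finset.range (M + 1),
                Set.indicator (Set.Icc ((j : ℝ) * Δ) (((j : ℝ) + 1) * Δ))
                  (fun _ => Real.exp (lam * j * Δ)) s) ^ 2)
        = 1 / (-(2 * lam))
          + (Real.exp (2 * lam * ((M : ℝ) + 1) * Δ) - 1) * Δ
              / (Real.exp (2 * lam * Δ) - 1)
            * (1 - 2 * (Real.exp (lam * Δ) - 1) / (lam * Δ))) ∧
    (∀ (Δs : ℕ → ℝ) (Ms : ℕ → ℕ), (∀ n, 0 < Δs n) →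
      Tendsto Δs atTop (nhds 0) →
      Tendsto (fun n => Δs n * (Ms n : ℝ)) atTop atTop →
      Tendsto (fun n =>
          ∫ s in Set.Ioi (0 : ℝ),
            (Real.exp (lam * s)
              - ∑ j ∈ Finset.range (Ms n + 1),
                  Set.indicator (Set.Icc ((j : ℝ) * Δs n) (((j : ℝ) + 1) * Δs n))
                    (fun _ => Real.exp (lam * j * Δs n)) s) ^ 2)
        atTop (nhds 0)) := by
  have hne : lam ≠ 0 := ne_of_lt hlam
  have h2ne : (2:ℝ)*lam ≠ 0 := by simp [hne]
  refine ⟨fun Δ hΔ M => kernel_formula lam hlam Δ hΔ M, ?_⟩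
  intro Δs Ms hpos hΔ0 hTM
  have hu : ∀ c : ℝ, c ≠ 0 → Tendsto (fun n => c * Δs n) atTop (𝓝[≠] 0) := by
    intro c hc
    rw [tendsto_nhdsWithin_iff]
    constructor
    · simpa using hΔ0.const_mul c
    · exact Eventually.of_forall fun n => mul_ne_zero hc (hpos n).ne'
  -- B part
  have hB : Tendsto (fun n => (Real.exp (lam*Δs n) - 1)/(lam*Δs n)) atTop (𝓝 1) :=
    slope_exp.comp (hu lam hne)
  have hB' : Tendsto (fun n => 1 - 2 * (Real.exp (lam * Δs n) - 1) / (lam * Δs n))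
      atTop (𝓝 (-1)) := by
    have h := (tendsto_const_nhds (x := (1:ℝ))).sub (hB.const_mul 2)
    have h2 : (1:ℝ) - 2*1 = -1 := by norm_num
    rw [h2] at h
    exact h.congr fun n => by ring
  -- A part
  have h2slope : Tendsto (fun n => (Real.exp (2*lam*Δs n) - 1)/(2*lam*Δs n)) atTop (𝓝 1) :=
    slope_exp.comp (hu (2*lam) h2ne)
  have hinv : Tendsto (fun n => (2*lam*Δs n)/(Real.exp (2*lam*Δs n) - 1)) atTop (𝓝 1) := by
    have h := h2slope.inv₀ one_ne_zero
    simp only [inv_div, inv_one] at h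
    exact h
  have hq_lim : Tendsto (fun n => Δs n / (Real.exp (2*lam*Δs n) - 1)) atTop (𝓝 (1/(2*lam))) := by
    have h := hinv.div_const (2*lam)
    refine h.congr fun n => ?_
    rw [div_div, mul_comm (Real.exp (2*lam*Δs n) - 1) (2*lam),
      ← div_div, mul_comm (2*lam) (Δs n), mul_div_assoc, div_self h2ne, mul_one]
  have hbase : Tendsto (fun n => 2*lam*(Δs n*(Ms n:ℝ))) atTop atBot :=
    (tendsto_const_mul_atBot_of_neg (by linarith)).mpr hTM
  have hexp : Tendsto (fun n => 2*lam*((Ms n:ℝ)+1)*Δs n) atTop atBot := by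
    apply tendsto_atBot_mono _ hbase
    intro n
    have h1 : 0 < -(2*lam) := by linarith
    nlinarith [mul_pos h1 (hpos n)]
  have hQ : Tendsto (fun n => Real.exp (2*lam*((Ms n:ℝ)+1)*Δs n)) atTop (𝓝 0) :=
    Real.tendsto_exp_atBot.comp hexp
  have hA : Tendsto (fun n => (Real.exp (2 * lam * ((Ms n : ℝ) + 1) * Δs n) - 1) * Δs n
      / (Real.exp (2 * lam * Δs n) - 1)) atTop (𝓝 (-(1/(2*lam)))) := by
    have h := (hQ.sub_const 1).mul hq_lim
    have h2 : ((0:ℝ) - 1) * (1/(2*lam)) = -(1/(2*lam)) := by ring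
    rw [h2] at h
    exact h.congr fun n => by ring
  have hsum := (tendsto_const_nhds (x := 1/(-(2*lam)))).add (hA.mul hB')
  have hz : (1/(-(2*lam)) : ℝ) + (-(1/(2*lam)))*(-1) = 0 := by ring
  rw [hz] at hsum
  exact hsum.congr fun n =>
    (kernel_formula lam hlam (Δs n) (hpos n) (Ms n)).symm
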